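/- Let A, B be n×n complex matrices with AB positive semidefinite, and let Z be positive definite with largest eigenvalue a and smallest eigenvalue b. Then ‖ZAB‖₁ ≤ ((a+b)/(2√(ab))) · ‖BZA‖₁, where ‖·‖₁ is the trace norm. -/

import Mathlib

open scoped ComplexOrder

/-- The trace norm of a matrix: the sum of its singular values, i.e. of the square roots of
the eigenvalues of `Xᴴ * X`. -/
noncomputable def traceNorm {n : ℕ} (X : Matrix (Fin n) (Fin n) ℂ) : ℝ :=
  ∑ i, Real.sqrt ((Matrix.posSemidef_conjTranspose_mul_self X).1.eigenvalues i)

open scoped ComplexInnerProductSpace Matrix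

section Helpers

variable {n : ℕ}

local notation "L" => Matrix.toEuclideanLin (𝕜 := ℂ) (m := Fin n) (n := Fin n)

private lemma myL_mul (P Q : Matrix (Fin n) (Fin n) ℂ) : L (P * Q) = (L P) ∘ₗ (L Q) := by
  simp [Matrix.toEuclideanLin_eq_toLin, Matrix.toLin_mul _ (PiLp.basisFun 2 ℂ (Fin n)) _]

private lemma inner_L_right (P : Matrix (Fin n) (Fin n) ℂ) (x y : EuclideanSpace ℂ (Fin n)) :
    ⟪x, L P y⟫ = ⟪L Pᴴ x, y⟫ := by
  rw [Matrix.toEuclideanLin_conjTranspose_eq_adjoint, LinearMap.adjoint_inner_left]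

private lemma inner_L_left (P : Matrix (Fin n) (Fin n) ℂ) (x y : EuclideanSpace ℂ (Fin n)) :
    ⟪L P x, y⟫ = ⟪x, L Pᴴ y⟫ := by
  rw [Matrix.toEuclideanLin_conjTranspose_eq_adjoint, LinearMap.adjoint_inner_right]

private lemma L_eigen {P : Matrix (Fin n) (Fin n) ℂ} (hP : P.IsHermitian) (i : Fin n) :
    L P (hP.eigenvectorBasis i) = (hP.eigenvalues i : ℂ) • hP.eigenvectorBasis i := by
  apply PiLp.ext
  intro j
  have h := congrFun (hP.mulVec_eigenvectorBasis i) j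
  simpa [Matrix.toEuclideanLin_apply, Complex.real_smul] using h

private lemma sum_inner_eq_sum_inner (Y : Matrix (Fin n) (Fin n) ℂ)
    (b c : OrthonormalBasis (Fin n) ℂ (EuclideanSpace ℂ (Fin n))) :
    ∑ i, ⟪b i, L Y (b i)⟫ = ∑ j, ⟪c j, L Y (c j)⟫ := by
  calc ∑ i, ⟪b i, L Y (b i)⟫
      = ∑ i, ∑ j, ⟪b i, c j⟫ * ⟪c j, L Y (b i)⟫ := by
        refine Finset.sum_congr rfl fun i _ => ?_
        rw [OrthonormalBasis.sum_inner_mul_inner]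
    _ = ∑ j, ∑ i, ⟪L Yᴴ (c j), b i⟫ * ⟪b i, c j⟫ := by
        rw [Finset.sum_comm]
        refine Finset.sum_congr rfl fun j _ => Finset.sum_congr rfl fun i _ => ?_
        rw [inner_L_right, mul_comm]
    _ = ∑ j, ⟪L Yᴴ (c j), c j⟫ := by
        refine Finset.sum_congr rfl fun j _ => ?_
        rw [OrthonormalBasis.sum_inner_mul_inner]
    _ = ∑ j, ⟪c j, L Y (c j)⟫ := by
        refine Finset.sum_congr rfl fun j _ => ?_
        rw [inner_L_right]

private lemma trace_eq_sum_inner (Y : Matrix (Fin n) (Fin n) ℂ)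
    (b : OrthonormalBasis (Fin n) ℂ (EuclideanSpace ℂ (Fin n))) :
    Y.trace = ∑ i, ⟪b i, L Y (b i)⟫ := by
  rw [sum_inner_eq_sum_inner Y b (EuclideanSpace.basisFun (Fin n) ℂ)]
  rw [Matrix.trace]
  refine Finset.sum_congr rfl fun j _ => ?_
  rw [EuclideanSpace.basisFun_apply, EuclideanSpace.inner_single_left]
  simp [Matrix.toEuclideanLin_apply, Matrix.mulVec_single, Matrix.diag]

private lemma norm_L_eigen (X : Matrix (Fin n) (Fin n) ℂ) (i : Fin n) :
    ‖L X ((Matrix.posSemidef_conjTranspose_mul_self X).1.eigenvectorBasis i)‖ =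
      Real.sqrt ((Matrix.posSemidef_conjTranspose_mul_self X).1.eigenvalues i) := by
  set hN := Matrix.posSemidef_conjTranspose_mul_self X
  set w := hN.1.eigenvectorBasis i
  have hw : ‖w‖ = 1 := hN.1.eigenvectorBasis.orthonormal.1 i
  have h1 : ⟪L X w, L X w⟫ = ((hN.1.eigenvalues i : ℝ) : ℂ) := by
    rw [inner_L_left, ← LinearMap.comp_apply, ← myL_mul, L_eigen hN.1 i, inner_smul_right]
    have : ⟪w, w⟫ = 1 := by
      rw [@inner_self_eq_norm_sq_to_K ℂ]
      simp [hw]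
    rw [this, mul_one]
  have h2 : (‖L X w‖ : ℝ)^2 = hN.1.eigenvalues i := by
    have := @inner_self_eq_norm_sq_to_K ℂ _ _ _ _ (L X w)
    rw [h1] at this
    have h3 : ((‖L X w‖ ^ 2 : ℝ) : ℂ) = ((hN.1.eigenvalues i : ℝ) : ℂ) := by
      push_cast
      exact this.symm
    exact_mod_cast h3
  rw [← h2, Real.sqrt_sq (norm_nonneg _)]

private lemma traceNorm_eq_sum_norm (X : Matrix (Fin n) (Fin n) ℂ) :
    traceNorm X =
      ∑ i, ‖L X ((Matrix.posSemidef_conjTranspose_mul_self X).1.eigenvectorBasis i)‖ := by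
  unfold traceNorm
  exact Finset.sum_congr rfl fun i _ => (norm_L_eigen X i).symm

private lemma re_trace_le_traceNorm (Y : Matrix (Fin n) (Fin n) ℂ) :
    (Y.trace).re ≤ traceNorm Y := by
  set hN := Matrix.posSemidef_conjTranspose_mul_self Y
  rw [trace_eq_sum_inner Y hN.1.eigenvectorBasis, traceNorm_eq_sum_norm, Complex.re_sum]
  refine Finset.sum_le_sum fun i _ => ?_
  calc (⟪hN.1.eigenvectorBasis i, L Y (hN.1.eigenvectorBasis i)⟫).re
      ≤ ‖⟪hN.1.eigenvectorBasis i, L Y (hN.1.eigenvectorBasis i)⟫‖ := Complex.re_le_norm _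
    _ ≤ ‖hN.1.eigenvectorBasis i‖ * ‖L Y (hN.1.eigenvectorBasis i)‖ := norm_inner_le_norm _ _
    _ = ‖L Y (hN.1.eigenvectorBasis i)‖ := by
        rw [hN.1.eigenvectorBasis.orthonormal.1 i, one_mul]

private lemma cs_complex (f g : Fin n → ℂ) :
    ‖∑ i, f i * g i‖ ≤ Real.sqrt (∑ i, ‖f i‖^2) * Real.sqrt (∑ i, ‖g i‖^2) := by
  calc ‖∑ i, f i * g i‖ ≤ ∑ i, ‖f i‖ * ‖g i‖ := by
        refine (norm_sum_le _ _).trans ?_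
        exact Finset.sum_le_sum fun i _ => by rw [norm_mul]
    _ ≤ Real.sqrt (∑ i, ‖f i‖^2) * Real.sqrt (∑ i, ‖g i‖^2) :=
        Real.sum_mul_le_sqrt_mul_sqrt Finset.univ (fun i => ‖f i‖) (fun i => ‖g i‖)

private lemma kantorovich (a b : ℝ) (hb : 0 < b) (hab : b ≤ a) (lam c : Fin n → ℝ)
    (hc : ∀ i, 0 ≤ c i) (h1 : ∀ i, b ≤ lam i) (h2 : ∀ i, lam i ≤ a) :
    Real.sqrt (∑ i, lam i * c i) * Real.sqrt (∑ i, (lam i)⁻¹ * c i) ≤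
      (a + b) / (2 * Real.sqrt (a * b)) * ∑ i, c i := by
  have ha : 0 < a := lt_of_lt_of_le hb hab
  have hP : 0 ≤ ∑ i, lam i * c i :=
    Finset.sum_nonneg fun i _ => mul_nonneg (le_of_lt (lt_of_lt_of_le hb (h1 i))) (hc i)
  have hQ : 0 ≤ ∑ i, (lam i)⁻¹ * c i :=
    Finset.sum_nonneg fun i _ =>
      mul_nonneg (inv_nonneg.2 (le_of_lt (lt_of_lt_of_le hb (h1 i)))) (hc i)
  set P := ∑ i, lam i * c i
  set Q := ∑ i, (lam i)⁻¹ * c i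
  have key : P + (a*b) * Q ≤ (a + b) * ∑ i, c i := by
    rw [Finset.mul_sum, ← Finset.sum_add_distrib, Finset.mul_sum]
    refine Finset.sum_le_sum fun i _ => ?_
    have hl : 0 < lam i := lt_of_lt_of_le hb (h1 i)
    have : lam i * c i + a * b * ((lam i)⁻¹ * c i) =
        (lam i + a * b * (lam i)⁻¹) * c i := by ring
    rw [this]
    have hle : lam i + a * b * (lam i)⁻¹ ≤ a + b := by
      rw [← sub_nonneg]
      have : a + b - (lam i + a * b * (lam i)⁻¹) = ((a - lam i) * (lam i - b)) * (lam i)⁻¹ := by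
        field_simp; ring
      rw [this]
      exact mul_nonneg (mul_nonneg (sub_nonneg.2 (h2 i)) (sub_nonneg.2 (h1 i)))
        (inv_nonneg.2 hl.le)
    exact mul_le_mul_of_nonneg_right hle (hc i)
  have amgm : 2 * (Real.sqrt P * Real.sqrt ((a*b) * Q)) ≤ P + (a*b)*Q := by
    have h := sq_nonneg (Real.sqrt P - Real.sqrt ((a*b)*Q))
    have h1' : Real.sqrt P ^ 2 = P := Real.sq_sqrt hP
    have h2' : Real.sqrt ((a*b)*Q) ^ 2 = (a*b)*Q :=
      Real.sq_sqrt (mul_nonneg (mul_nonneg ha.le hb.le) hQ)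
    nlinarith [h, h1', h2']
  have hsab : Real.sqrt ((a*b)*Q) = Real.sqrt (a*b) * Real.sqrt Q :=
    Real.sqrt_mul (mul_nonneg ha.le hb.le) _
  have hab0 : 0 < Real.sqrt (a*b) := Real.sqrt_pos.2 (mul_pos ha hb)
  have hmain : 2 * Real.sqrt (a*b) * (Real.sqrt P * Real.sqrt Q) ≤ (a+b) * ∑ i, c i := by
    calc 2 * Real.sqrt (a*b) * (Real.sqrt P * Real.sqrt Q)
        = 2 * (Real.sqrt P * Real.sqrt ((a*b)*Q)) := by rw [hsab]; ring
      _ ≤ P + (a*b)*Q := amgm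
      _ ≤ (a+b) * ∑ i, c i := key
  calc Real.sqrt P * Real.sqrt Q
      = (2 * Real.sqrt (a*b) * (Real.sqrt P * Real.sqrt Q)) / (2 * Real.sqrt (a*b)) := by
        field_simp
    _ ≤ ((a+b) * ∑ i, c i) / (2 * Real.sqrt (a*b)) := by
        exact div_le_div_of_nonneg_right hmain (by positivity) |>.trans_eq rfl
    _ = (a + b) / (2 * Real.sqrt (a*b)) * ∑ i, c i := by ring

/-- Spectral expansion of the real quadratic form of a matrix whose action on an
orthonormal basis is by real scalars. -/
private lemma re_inner_eq_sum {P : Matrix (Fin n) (Fin n) ℂ} (hP : Pᴴ = P)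
    (e : OrthonormalBasis (Fin n) ℂ (EuclideanSpace ℂ (Fin n))) (lam : Fin n → ℝ)
    (he : ∀ i, L P (e i) = (lam i : ℂ) • e i) (x : EuclideanSpace ℂ (Fin n)) :
    (⟪x, L P x⟫).re = ∑ i, lam i * ‖⟪e i, x⟫‖^2 := by
  have hexp : ⟪x, L P x⟫ = ∑ i, ((lam i * ‖⟪e i, x⟫‖^2 : ℝ) : ℂ) := by
    rw [← OrthonormalBasis.sum_inner_mul_inner e x (L P x)]
    refine Finset.sum_congr rfl fun i _ => ?_
    have h1 : ⟪e i, L P x⟫ = (lam i : ℂ) * ⟪e i, x⟫ := by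
      rw [inner_L_right, hP, he i, inner_smul_left]
      simp [Complex.conj_ofReal]
    have h2 : ⟪x, e i⟫ * ⟪e i, x⟫ = ((‖⟪e i, x⟫‖^2 : ℝ) : ℂ) := by
      rw [← inner_conj_symm x (e i), RCLike.conj_mul]
      norm_cast
    calc ⟪x, e i⟫ * ⟪e i, L P x⟫
        = (lam i : ℂ) * (⟪x, e i⟫ * ⟪e i, x⟫) := by rw [h1]; ring
      _ = ((lam i * ‖⟪e i, x⟫‖^2 : ℝ) : ℂ) := by rw [h2]; push_cast; ring
  rw [hexp, Complex.re_sum]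
  refine Finset.sum_congr rfl fun i _ => ?_
  exact Complex.ofReal_re _

private lemma L_one : (L (1 : Matrix (Fin n) (Fin n) ℂ)) = LinearMap.id := by
  apply LinearMap.ext
  intro x
  apply PiLp.ext
  intro j
  simp [Matrix.toEuclideanLin_apply]

private lemma L_inv_eigen {Z : Matrix (Fin n) (Fin n) ℂ} (hZ : Z.PosDef) (i : Fin n) :
    L Z⁻¹ (hZ.1.eigenvectorBasis i) =
      (((hZ.1.eigenvalues i)⁻¹ : ℝ) : ℂ) • hZ.1.eigenvectorBasis i := by
  have hdet : IsUnit Z.det := hZ.det_pos.ne'.isUnit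
  have h1 : Z⁻¹ * Z = 1 := Matrix.nonsing_inv_mul Z hdet
  have hlam : (hZ.1.eigenvalues i : ℝ) ≠ 0 := (hZ.eigenvalues_pos i).ne'
  have key : (hZ.1.eigenvalues i : ℂ) • (L Z⁻¹ (hZ.1.eigenvectorBasis i)) =
      hZ.1.eigenvectorBasis i := by
    rw [← map_smul, ← L_eigen hZ.1 i, ← LinearMap.comp_apply, ← myL_mul, h1, L_one,
      LinearMap.id_apply]
  have hlamC : (hZ.1.eigenvalues i : ℂ) ≠ 0 := by exact_mod_cast hlam
  calc L Z⁻¹ (hZ.1.eigenvectorBasis i)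
      = ((hZ.1.eigenvalues i : ℂ))⁻¹ • ((hZ.1.eigenvalues i : ℂ) •
          (L Z⁻¹ (hZ.1.eigenvectorBasis i))) := by
        rw [smul_smul, inv_mul_cancel₀ hlamC, one_smul]
    _ = (((hZ.1.eigenvalues i)⁻¹ : ℝ) : ℂ) • hZ.1.eigenvectorBasis i := by
        rw [key]
        norm_cast

private lemma kant_vec {Z : Matrix (Fin n) (Fin n) ℂ} (hZ : Z.PosDef) {a b : ℝ}
    (hbpos : 0 < b) (hba : b ≤ a)
    (ha : ∀ i, hZ.1.eigenvalues i ≤ a) (hb : ∀ i, b ≤ hZ.1.eigenvalues i)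
    {S : Matrix (Fin n) (Fin n) ℂ} (hS : S * S = Z) (hSh : Sᴴ = S)
    (x : EuclideanSpace ℂ (Fin n)) (hx : ‖x‖ = 1) :
    ‖L S x‖ * ‖L S⁻¹ x‖ ≤ (a + b) / (2 * Real.sqrt (a * b)) := by
  have hZdet : IsUnit Z.det := hZ.det_pos.ne'.isUnit
  have hSdetu : IsUnit S.det := by
    have hd : S.det * S.det = Z.det := by rw [← Matrix.det_mul, hS]
    exact isUnit_iff_ne_zero.2 fun h =>
      (isUnit_iff_ne_zero.1 hZdet) (by rw [← hd, h, mul_zero])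
  have hSih : (S⁻¹)ᴴ = S⁻¹ := by rw [Matrix.conjTranspose_nonsing_inv, hSh]
  have hZinv : S⁻¹ * S⁻¹ = Z⁻¹ := by rw [← hS, Matrix.mul_inv_rev]
  have hZih : (Z⁻¹)ᴴ = Z⁻¹ := by rw [Matrix.conjTranspose_nonsing_inv, hZ.1.eq]
  set lam := hZ.1.eigenvalues with hlam
  set e := hZ.1.eigenvectorBasis with he
  -- ‖L S x‖ ^ 2 = re ⟪x, L Z x⟫
  have hns : ∀ (T : Matrix (Fin n) (Fin n) ℂ), Tᴴ = T → ∀ W, T * T = W →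
      ‖L T x‖^2 = (⟪x, L W x⟫).re := by
    intro T hT W hW
    have h1 : ⟪L T x, L T x⟫ = ⟪x, L W x⟫ := by
      rw [inner_L_left, hT, ← LinearMap.comp_apply, ← myL_mul, hW]
    rw [← h1, @inner_self_eq_norm_sq_to_K ℂ]
    norm_cast
  have hSx : ‖L S x‖^2 = (⟪x, L Z x⟫).re := hns S hSh Z hS
  have hSix : ‖L S⁻¹ x‖^2 = (⟪x, L Z⁻¹ x⟫).re := hns S⁻¹ hSih Z⁻¹ hZinv
  have hZx : (⟪x, L Z x⟫).re = ∑ i, lam i * ‖⟪e i, x⟫‖^2 :=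
    re_inner_eq_sum hZ.1 e lam (fun i => L_eigen hZ.1 i) x
  have hZix : (⟪x, L Z⁻¹ x⟫).re = ∑ i, (lam i)⁻¹ * ‖⟪e i, x⟫‖^2 :=
    re_inner_eq_sum hZih e (fun i => (lam i)⁻¹) (fun i => L_inv_eigen hZ i) x
  have hself : (⟪x, x⟫).re = ‖x‖^2 := by
    rw [@inner_self_eq_norm_sq_to_K ℂ]
    norm_cast
  have hones : ∑ i, ‖⟪e i, x⟫‖^2 = 1 := by
    have h1 := re_inner_eq_sum (Matrix.conjTranspose_one) e (fun _ => (1:ℝ))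
      (fun i => by rw [L_one]; simp) x
    rw [L_one] at h1
    simp only [LinearMap.id_apply, one_mul] at h1
    rw [← h1, hself, hx, one_pow]
  have hc0 : ∀ i, (0:ℝ) ≤ ‖⟪e i, x⟫‖^2 := fun i => sq_nonneg _
  have hnorm1 : ‖L S x‖ = Real.sqrt (∑ i, lam i * ‖⟪e i, x⟫‖^2) := by
    rw [← hZx, ← hSx, Real.sqrt_sq (norm_nonneg _)]
  have hnorm2 : ‖L S⁻¹ x‖ = Real.sqrt (∑ i, (lam i)⁻¹ * ‖⟪e i, x⟫‖^2) := by
    rw [← hZix, ← hSix, Real.sqrt_sq (norm_nonneg _)]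
  rw [hnorm1, hnorm2]
  have := kantorovich a b hbpos hba lam (fun i => ‖⟪e i, x⟫‖^2) hc0 hb ha
  rw [hones, mul_one] at this
  exact this

/-- The core trace-norm estimate: if `X = S * M * S⁻¹` with `M` positive semidefinite and the
`S`-condition bound `hkant` holds, then `traceNorm X ≤ c * re (tr M)`. -/
private lemma core (X M S : Matrix (Fin n) (Fin n) ℂ) (hM : M.PosSemidef) (c : ℝ)
    (hX : S * M * S⁻¹ = X) (hSih : (S⁻¹)ᴴ = S⁻¹)
    (hkant : ∀ x : EuclideanSpace ℂ (Fin n), ‖x‖ = 1 → ‖L S x‖ * ‖L S⁻¹ x‖ ≤ c) :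
    traceNorm X ≤ c * (M.trace).re := by
  classical
  have hN : (Xᴴ * X).PosSemidef := Matrix.posSemidef_conjTranspose_mul_self X
  set w := hN.1.eigenvectorBasis with hw
  set v := hM.1.eigenvectorBasis with hv
  set μ := hM.1.eigenvalues with hμ
  have hμ0 : ∀ k, 0 ≤ μ k := hM.eigenvalues_nonneg
  set g : EuclideanSpace ℂ (Fin n) →ₗ[ℂ] EuclideanSpace ℂ (Fin n) := L X with hg
  set u : Fin n → EuclideanSpace ℂ (Fin n) :=
    fun i => ((‖g (w i)‖⁻¹ : ℝ) : ℂ) • g (w i) with hu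
  -- each norm equals a real part of an inner product against u i
  have f1 : ∀ i, ‖g (w i)‖ = (⟪u i, g (w i)⟫).re := by
    intro i
    by_cases hgi : g (w i) = 0
    · simp [hu, hgi]
    · have hne : ‖g (w i)‖ ≠ 0 := norm_ne_zero_iff.2 hgi
      rw [hu]
      simp only
      have hre : (⟪g (w i), g (w i)⟫).re = ‖g (w i)‖^2 := by
        rw [← RCLike.re_to_complex]
        exact inner_self_eq_norm_sq (g (w i))
      have him : (⟪g (w i), g (w i)⟫).im = 0 := by
        rw [← RCLike.im_to_complex]
        exact inner_self_im (𝕜 := ℂ) (g (w i))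
      rw [inner_smul_left, Complex.conj_ofReal, Complex.mul_re, Complex.ofReal_re,
        Complex.ofReal_im, hre, him]
      rw [sq]
      field_simp
      simp
  -- inner products of images of the eigenbasis
  have hgw : ∀ i j, ⟪g (w i), g (w j)⟫ =
      if i = j then ((hN.1.eigenvalues j : ℝ) : ℂ) else 0 := by
    intro i j
    rw [hg]
    rw [inner_L_left, ← LinearMap.comp_apply, ← myL_mul, L_eigen hN.1 j, inner_smul_right]
    rw [orthonormal_iff_ite.1 w.orthonormal i j]
    by_cases hij : i = j <;> simp [hij]
  have hnormgw : ∀ i, ‖g (w i)‖ = Real.sqrt (hN.1.eigenvalues i) := fun i => norm_L_eigen X i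
  -- the orthonormal family u on nonzero indices
  have f2 : Orthonormal ℂ (fun p : {i : Fin n // g (w i) ≠ 0} => u p) := by
    rw [orthonormal_iff_ite]
    intro p q
    have hcalc : ⟪u (p : Fin n), u (q : Fin n)⟫ =
        ((‖g (w (p : Fin n))‖⁻¹ : ℝ) : ℂ) * (((‖g (w (q : Fin n))‖⁻¹ : ℝ) : ℂ) *
          ⟪g (w (p : Fin n)), g (w (q : Fin n))⟫) := by
      rw [hu]
      simp only
      rw [inner_smul_left, inner_smul_right, Complex.conj_ofReal]
    by_cases hpq : p = q
    · subst hpq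
      simp only [if_pos rfl]
      rw [hcalc, hgw]
      simp only [if_pos rfl]
      have hne : ‖g (w (p : Fin n))‖ ≠ 0 := norm_ne_zero_iff.2 p.2
      have hval : ((hN.1.eigenvalues (p : Fin n) : ℝ) : ℂ)
          = ((‖g (w (p : Fin n))‖^2 : ℝ) : ℂ) := by
        norm_cast
        rw [hnormgw]
        rw [Real.sq_sqrt (hN.eigenvalues_nonneg _)]
      rw [hval]
      push_cast
      rw [sq]
      field_simp
    · have hpq' : (p : Fin n) ≠ (q : Fin n) := fun h => hpq (Subtype.ext h)
      rw [if_neg hpq, hcalc, hgw, if_neg hpq', mul_zero, mul_zero]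
  -- expansion of M action
  have hrepr : ∀ y, L M y = ∑ k, (⟪v k, y⟫ * (μ k : ℂ)) • v k := by
    intro y
    conv_lhs => rw [← v.sum_repr' y]
    rw [map_sum]
    refine Finset.sum_congr rfl fun k _ => ?_
    rw [map_smul, hv, hμ, L_eigen hM.1 k, smul_smul]
  have hgcomp : ∀ y, g y = L S (L M (L S⁻¹ y)) := by
    intro y
    rw [hg]
    rw [← hX, myL_mul, myL_mul]
    rfl
  have hgexp : ∀ i, g (w i) =
      ∑ k, (⟪v k, L S⁻¹ (w i)⟫ * (μ k : ℂ)) • L S (v k) := by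
    intro i
    rw [hgcomp, hrepr, map_sum]
    exact Finset.sum_congr rfl fun k _ => map_smul _ _ _
  have f4 : ∀ i, ⟪u i, g (w i)⟫ =
      ∑ k, (μ k : ℂ) * (⟪u i, L S (v k)⟫ * ⟪v k, L S⁻¹ (w i)⟫) := by
    intro i
    rw [hgexp i, inner_sum]
    refine Finset.sum_congr rfl fun k _ => ?_
    rw [inner_smul_right]
    ring
  -- Bessel bounds
  have bessel_u : ∀ y : EuclideanSpace ℂ (Fin n),
      ∑ i, ‖⟪u i, y⟫‖^2 ≤ ‖y‖^2 := by
    intro y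
    have hzero' : ∑ p : {i : Fin n // ¬ g (w i) ≠ 0}, ‖⟪u (p : Fin n), y⟫‖^2 = 0 := by
      apply Finset.sum_eq_zero
      intro p _
      have hp : g (w (p : Fin n)) = 0 := not_not.1 p.2
      rw [hu]
      simp [hp]
    have hsplit := Fintype.sum_subtype_add_sum_subtype (fun i : Fin n => g (w i) ≠ 0)
      (fun i => ‖⟪u i, y⟫‖^2)
    have hbess := f2.sum_inner_products_le (s := Finset.univ) y
    calc ∑ i, ‖⟪u i, y⟫‖^2
        = ∑ p : {i : Fin n // g (w i) ≠ 0}, ‖⟪u (p : Fin n), y⟫‖^2 := by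
          rw [← hsplit, hzero', add_zero]
      _ ≤ ‖y‖^2 := hbess
  have bessel_w : ∀ y : EuclideanSpace ℂ (Fin n),
      ∑ i, ‖⟪y, w i⟫‖^2 ≤ ‖y‖^2 := by
    intro y
    have := w.orthonormal.sum_inner_products_le (s := Finset.univ) y
    calc ∑ i, ‖⟪y, w i⟫‖^2 = ∑ i, ‖⟪w i, y⟫‖^2 := by
          exact Finset.sum_congr rfl fun i _ => by rw [norm_inner_symm]
      _ ≤ ‖y‖^2 := this
  -- the per-k inner sums
  have hTbound : ∀ k, ‖∑ i, ⟪u i, L S (v k)⟫ * ⟪v k, L S⁻¹ (w i)⟫‖ ≤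
      ‖L S (v k)‖ * ‖L S⁻¹ (v k)‖ := by
    intro k
    have hcs := cs_complex (fun i => ⟪u i, L S (v k)⟫) (fun i => ⟪v k, L S⁻¹ (w i)⟫)
    refine hcs.trans ?_
    have h1 : ∑ i, ‖⟪u i, L S (v k)⟫‖^2 ≤ ‖L S (v k)‖^2 := bessel_u _
    have h2 : ∑ i, ‖⟪v k, L S⁻¹ (w i)⟫‖^2 ≤ ‖L S⁻¹ (v k)‖^2 := by
      have heq : ∀ i, ⟪v k, L S⁻¹ (w i)⟫ = ⟪L S⁻¹ (v k), w i⟫ := by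
        intro i
        rw [inner_L_right, hSih]
      calc ∑ i, ‖⟪v k, L S⁻¹ (w i)⟫‖^2 = ∑ i, ‖⟪L S⁻¹ (v k), w i⟫‖^2 := by
            exact Finset.sum_congr rfl fun i _ => by rw [heq]
        _ ≤ ‖L S⁻¹ (v k)‖^2 := bessel_w _
    calc Real.sqrt (∑ i, ‖⟪u i, L S (v k)⟫‖^2) * Real.sqrt (∑ i, ‖⟪v k, L S⁻¹ (w i)⟫‖^2)
        ≤ Real.sqrt (‖L S (v k)‖^2) * Real.sqrt (‖L S⁻¹ (v k)‖^2) := by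
          apply mul_le_mul
          · exact Real.sqrt_le_sqrt h1
          · exact Real.sqrt_le_sqrt h2
          · exact Real.sqrt_nonneg _
          · exact Real.sqrt_nonneg _
      _ = ‖L S (v k)‖ * ‖L S⁻¹ (v k)‖ := by
          rw [Real.sqrt_sq (norm_nonneg _), Real.sqrt_sq (norm_nonneg _)]
  -- trace of M
  have htr : (M.trace).re = ∑ k, μ k := by
    rw [trace_eq_sum_inner M v, Complex.re_sum]
    refine Finset.sum_congr rfl fun k _ => ?_
    rw [L_eigen hM.1 k, inner_smul_right, @inner_self_eq_norm_sq_to_K ℂ,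
      v.orthonormal.1 k]
    simp
    rfl
  have hkant' : ∀ k, ‖L S (v k)‖ * ‖L S⁻¹ (v k)‖ ≤ c :=
    fun k => hkant _ (v.orthonormal.1 k)
  -- the main chain
  have h0 : traceNorm X = ∑ i, ‖g (w i)‖ := traceNorm_eq_sum_norm X
  calc traceNorm X = ∑ i, ‖g (w i)‖ := h0
    _ = ∑ i, (⟪u i, g (w i)⟫).re := Finset.sum_congr rfl fun i _ => f1 i
    _ = (∑ i, ⟪u i, g (w i)⟫).re := by rw [Complex.re_sum]
    _ = (∑ k, (μ k : ℂ) * ∑ i, ⟪u i, L S (v k)⟫ * ⟪v k, L S⁻¹ (w i)⟫).re := by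
        congr 1
        rw [Finset.sum_congr rfl (fun i _ => f4 i), Finset.sum_comm]
        exact Finset.sum_congr rfl fun k _ => by rw [Finset.mul_sum]
    _ = ∑ k, μ k * (∑ i, ⟪u i, L S (v k)⟫ * ⟪v k, L S⁻¹ (w i)⟫).re := by
        rw [Complex.re_sum]
        refine Finset.sum_congr rfl fun k _ => ?_
        simp [Complex.mul_re]
    _ ≤ ∑ k, μ k * c := by
        refine Finset.sum_le_sum fun k _ => ?_
        refine mul_le_mul_of_nonneg_left ?_ (hμ0 k)
        refine le_trans (Complex.re_le_norm _) ?_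
        exact le_trans (hTbound k) (hkant' k)
    _ = c * (M.trace).re := by
        rw [htr, ← Finset.sum_mul, mul_comm]

end Helpers

theorem stmt_3 (n : ℕ) (A B Z : Matrix (Fin n) (Fin n) ℂ)
    (hAB : (A * B).PosSemidef) (hZ : Z.PosDef) (a b : ℝ)
    (ha : ∀ i, hZ.1.eigenvalues i ≤ a) (ha' : ∃ i, hZ.1.eigenvalues i = a)
    (hb : ∀ i, b ≤ hZ.1.eigenvalues i) (hb' : ∃ i, hZ.1.eigenvalues i = b) :
    traceNorm (Z * A * B) ≤ (a + b) / (2 * Real.sqrt (a * b)) * traceNorm (B * Z * A) := by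
  classical
  obtain ⟨i₀, hi₀⟩ := hb'
  have hbpos : 0 < b := by rw [← hi₀]; exact hZ.eigenvalues_pos i₀
  have hba : b ≤ a := by rw [← hi₀]; exact ha i₀
  have hapos : 0 < a := lt_of_lt_of_le hbpos hba
  have hc0 : 0 ≤ (a + b) / (2 * Real.sqrt (a * b)) := by positivity
  have hZps : Z.PosSemidef := hZ.posSemidef
  open scoped MatrixOrder in
  set S : Matrix (Fin n) (Fin n) ℂ := CFC.sqrt Z with hSdef
  open scoped MatrixOrder in
  have hS : S * S = Z := CFC.sqrt_mul_sqrt_self Z hZps.nonneg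
  open scoped MatrixOrder in
  have hSh : Sᴴ = S := (Matrix.LE.le.posSemidef (CFC.sqrt_nonneg Z)).1
  have hZdet : IsUnit Z.det := hZ.det_pos.ne'.isUnit
  have hSdetu : IsUnit S.det := by
    have hd : S.det * S.det = Z.det := by rw [← Matrix.det_mul, hS]
    exact isUnit_iff_ne_zero.2 fun h =>
      (isUnit_iff_ne_zero.1 hZdet) (by rw [← hd, h, mul_zero])
  have hSSi : S * S⁻¹ = 1 := Matrix.mul_nonsing_inv S hSdetu
  have hSih : (S⁻¹)ᴴ = S⁻¹ := by rw [Matrix.conjTranspose_nonsing_inv, hSh]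
  have hM : (S * (A * B) * S).PosSemidef := by
    have h := hAB.mul_mul_conjTranspose_same S
    rwa [hSh] at h
  have hX : S * (S * (A * B) * S) * S⁻¹ = Z * A * B := by
    calc S * (S * (A * B) * S) * S⁻¹ = (S * S) * (A * B) * (S * S⁻¹) := by
          noncomm_ring
      _ = Z * (A * B) * 1 := by rw [hS, hSSi]
      _ = Z * A * B := by rw [Matrix.mul_one, ← Matrix.mul_assoc]
  have hkant : ∀ x : EuclideanSpace ℂ (Fin n), ‖x‖ = 1 →
      ‖Matrix.toEuclideanLin S x‖ * ‖Matrix.toEuclideanLin S⁻¹ x‖ ≤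
        (a + b) / (2 * Real.sqrt (a * b)) :=
    fun x hx => kant_vec hZ hbpos hba ha hb hS hSh x hx
  have hcore := core (Z * A * B) (S * (A * B) * S) S hM
    ((a + b) / (2 * Real.sqrt (a * b))) hX hSih hkant
  refine hcore.trans ?_
  have htr : (S * (A * B) * S).trace = (B * Z * A).trace := by
    calc (S * (A * B) * S).trace
        = (S * (S * (A * B))).trace := Matrix.trace_mul_comm _ _
      _ = ((S * S) * (A * B)).trace := by rw [Matrix.mul_assoc]
      _ = (Z * (A * B)).trace := by rw [hS]
      _ = ((A * B) * Z).trace := Matrix.trace_mul_comm _ _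
      _ = (A * (B * Z)).trace := by rw [Matrix.mul_assoc]
      _ = ((B * Z) * A).trace := Matrix.trace_mul_comm _ _
      _ = (B * Z * A).trace := rfl
  rw [htr]
  exact mul_le_mul_of_nonneg_left (re_trace_le_traceNorm (B * Z * A)) hc0
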